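/- The size lower bound: for measure networks X, Y and p ∈ [1,∞], 2 d_{N,p}(X,Y) ≥ |size_p(X) − size_p(Y)|, where size_p(X) := ‖ω_X‖_{L^p(μ_X ⊗ μ_X)}. -/

import Mathlib

open MeasureTheory ENNReal

/-- The set of couplings between two measures: probability-type measures on the product
with the prescribed marginals. -/
def Coupling {X Y : Type*} [MeasurableSpace X] [MeasurableSpace Y]
    (μX : Measure X) (μY : Measure Y) : Set (Measure (X × Y)) :=
  {μ | μ.fst = μX ∧ μ.snd = μY}

/-- The `p`-distortion of a coupling `μ` between two measure networks, namely
`‖ω_X - ω_Y‖_{L^p(μ ⊗ μ)}` (for `p = ∞` this is the essential supremum). -/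
noncomputable def dis {X Y : Type*} [MeasurableSpace X] [MeasurableSpace Y]
    (ωX : X × X → ℝ) (ωY : Y × Y → ℝ) (p : ℝ≥0∞) (μ : Measure (X × Y)) : ℝ≥0∞ :=
  eLpNorm (fun q : (X × Y) × (X × Y) => ωX (q.1.1, q.2.1) - ωY (q.1.2, q.2.2)) p (μ.prod μ)

/-- The network Gromov–Wasserstein distance: half the infimal `p`-distortion over couplings. -/
noncomputable def dN {X Y : Type*} [MeasurableSpace X] [MeasurableSpace Y]
    (ωX : X × X → ℝ) (ωY : Y × Y → ℝ) (p : ℝ≥0∞) (μX : Measure X) (μY : Measure Y) : ℝ≥0∞ :=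
  (1 / 2) * ⨅ μ ∈ Coupling μX μY, dis ωX ωY p μ

/-- The `p`-th size of a measure network: `size_p(X) = ‖ω_X‖_{L^p(μ_X ⊗ μ_X)}`. -/
noncomputable def sizeN {X : Type*} [MeasurableSpace X]
    (p : ℝ≥0∞) (ωX : X × X → ℝ) (μX : Measure X) : ℝ≥0∞ :=
  eLpNorm ωX p (μX.prod μX)

lemma sizeN_fst_eq {X Y : Type*} [MeasurableSpace X] [MeasurableSpace Y]
    (μ : Measure (X × Y)) [SFinite μ] (μX : Measure X) (h : μ.fst = μX)
    (ωX : X × X → ℝ) (hωX : Measurable ωX) (p : ℝ≥0∞) :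
    sizeN p ωX μX
      = eLpNorm (fun q : (X × Y) × (X × Y) => ωX (q.1.1, q.2.1)) p (μ.prod μ) := by
  have hmap : μX.prod μX = (μ.prod μ).map (Prod.map Prod.fst Prod.fst) := by
    rw [← Measure.map_prod_map _ _ measurable_fst measurable_fst]
    simp [← h, Measure.fst]
  rw [sizeN, hmap, eLpNorm_map_measure hωX.aestronglyMeasurable
    (measurable_fst.prodMap measurable_fst).aemeasurable]
  rfl

lemma sizeN_snd_eq {X Y : Type*} [MeasurableSpace X] [MeasurableSpace Y]
    (μ : Measure (X × Y)) [SFinite μ] (μY : Measure Y) (h : μ.snd = μY)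
    (ωY : Y × Y → ℝ) (hωY : Measurable ωY) (p : ℝ≥0∞) :
    sizeN p ωY μY
      = eLpNorm (fun q : (X × Y) × (X × Y) => ωY (q.1.2, q.2.2)) p (μ.prod μ) := by
  have hmap : μY.prod μY = (μ.prod μ).map (Prod.map Prod.snd Prod.snd) := by
    rw [← Measure.map_prod_map _ _ measurable_snd measurable_snd]
    simp [← h, Measure.snd]
  rw [sizeN, hmap, eLpNorm_map_measure hωY.aestronglyMeasurable
    (measurable_snd.prodMap measurable_snd).aemeasurable]
  rfl

lemma sizeN_sub_le {X Y : Type*} [MeasurableSpace X] [MeasurableSpace Y]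
    (μ : Measure (X × Y)) [SFinite μ] (μX : Measure X) (μY : Measure Y)
    (hfst : μ.fst = μX) (hsnd : μ.snd = μY)
    (ωX : X × X → ℝ) (ωY : Y × Y → ℝ) (hωX : Measurable ωX) (hωY : Measurable ωY)
    (p : ℝ≥0∞) (hp : 1 ≤ p) :
    sizeN p ωX μX ≤ dis ωX ωY p μ + sizeN p ωY μY := by
  set f : (X × Y) × (X × Y) → ℝ := fun q => ωX (q.1.1, q.2.1) with hf
  set g : (X × Y) × (X × Y) → ℝ := fun q => ωY (q.1.2, q.2.2) with hg
  have hfm : Measurable f := hωX.comp ((measurable_fst.fst).prodMk (measurable_snd.fst))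
  have hgm : Measurable g := hωY.comp ((measurable_fst.snd).prodMk (measurable_snd.snd))
  rw [sizeN_fst_eq μ μX hfst ωX hωX p, sizeN_snd_eq μ μY hsnd ωY hωY p]
  have h1 : eLpNorm f p (μ.prod μ) = eLpNorm ((f - g) + g) p (μ.prod μ) := by
    congr 1; ext q; simp
  rw [h1]
  exact eLpNorm_add_le (hfm.sub hgm).aestronglyMeasurable hgm.aestronglyMeasurable hp

/-- **The size lower bound**: `2 d_{N,p}(X,Y) ≥ |size_p(X) − size_p(Y)|`. -/
theorem size_lower_bound
    {X Y : Type*} [TopologicalSpace X] [PolishSpace X] [MeasurableSpace X] [BorelSpace X]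
    [TopologicalSpace Y] [PolishSpace Y] [MeasurableSpace Y] [BorelSpace Y]
    (μX : Measure X) (μY : Measure Y) [IsProbabilityMeasure μX] [IsProbabilityMeasure μY]
    (ωX : X × X → ℝ) (ωY : Y × Y → ℝ)
    (hωX : Measurable ωX) (hωY : Measurable ωY)
    (hbX : ∃ M, ∀ q, |ωX q| ≤ M) (hbY : ∃ M, ∀ q, |ωY q| ≤ M)
    (p : ℝ≥0∞) (hp : 1 ≤ p) :
    (sizeN p ωX μX - sizeN p ωY μY) ⊔ (sizeN p ωY μY - sizeN p ωX μX)
      ≤ 2 * dN ωX ωY p μX μY := by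
  have h2 : 2 * dN ωX ωY p μX μY = ⨅ μ ∈ Coupling μX μY, dis ωX ωY p μ := by
    rw [dN, ← mul_assoc, one_div, ENNReal.mul_inv_cancel (by norm_num) (by norm_num), one_mul]
  rw [h2]
  refine sup_le (le_iInf₂ fun μ hμ => ?_) (le_iInf₂ fun μ hμ => ?_) <;>
  · obtain ⟨hfst, hsnd⟩ := hμ
    have hprob : IsProbabilityMeasure μ := by
      constructor
      have h1 : μ.fst Set.univ = 1 := by rw [hfst]; simp
      simpa [Measure.fst_apply MeasurableSet.univ] using h1
    rw [tsub_le_iff_right]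
    first
    | exact sizeN_sub_le μ μX μY hfst hsnd ωX ωY hωX hωY p hp
    | · have key := sizeN_sub_le ((Measure.map Prod.swap μ)) μY μX ?_ ?_ ωY ωX hωY hωX p hp
        · refine le_trans key ?_
          gcongr
          rw [dis, dis]
          have hswap : (Measure.map Prod.swap μ).prod (Measure.map Prod.swap μ)
              = (μ.prod μ).map (Prod.map Prod.swap Prod.swap) := by
            rw [← Measure.map_prod_map _ _ measurable_swap measurable_swap]
          have hm : AEStronglyMeasurable
              (fun q : (Y × X) × (Y × X) => ωY (q.1.1, q.2.1) - ωX (q.1.2, q.2.2))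
              ((μ.prod μ).map (Prod.map Prod.swap Prod.swap)) :=
            ((hωY.comp ((measurable_fst.fst).prodMk (measurable_snd.fst))).sub
              (hωX.comp ((measurable_fst.snd).prodMk (measurable_snd.snd)))).aestronglyMeasurable
          rw [hswap, eLpNorm_map_measure hm
            (measurable_swap.prodMap measurable_swap).aemeasurable]
          have hcomp : (fun q : (Y × X) × (Y × X) => ωY (q.1.1, q.2.1) - ωX (q.1.2, q.2.2))
              ∘ (Prod.map Prod.swap Prod.swap)
              = -(fun q : (X × Y) × (X × Y) => ωX (q.1.1, q.2.1) - ωY (q.1.2, q.2.2)) := by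
            ext q; simp
          rw [hcomp, eLpNorm_neg]
        · rw [Measure.fst, Measure.map_map measurable_fst measurable_swap]
          exact hsnd
        · rw [Measure.snd, Measure.map_map measurable_snd measurable_swap]
          exact hfst
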